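/- arXiv:1201.0199 — 2 statements merged into one kernel-verified Lean document; each statement's English description precedes it below -/
import Mathlib

section
/- Let n ≥ 4 be even and let Δ_{S(n)} = π(Δ̂_{S(n)}) ⊂ V be as in the context (the root system of S'(n) coincides with that of S(n)). Then there exists no parabolic set of roots P of Δ_{S(n)} admitting a nilradical N⁺ such that for all α, β ∈ N⁺ one has both α̂ + β̂ ∉ Δ_{W(n)} and not (α̂ = −ε_i and β̂ = −ε_j for some i ≠ j), where α̂ denotes the unique element of Δ̂_{S(n)} with π(α̂) = α. In other words, S'(n) has no cominuscule parabolic sets of roots. -/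
open Pointwise

/-- A subset `Pt` of a symmetric set `Φ` (`Φ = -Φ`) is a parabolic set if it is proper,
`Φ = Pt ∪ (-Pt)`, and `Pt` is closed under sums lying in `Φ`. -/
def IsParabolicIn {V : Type*} [AddCommGroup V] (Φ Pt : Set V) : Prop :=
  Pt ⊂ Φ ∧ Φ = Pt ∪ (-Pt) ∧ ∀ α ∈ Pt, ∀ β ∈ Pt, α + β ∈ Φ → α + β ∈ Pt

/-- A proper subset `P` of `Δ` is a parabolic set of roots if `P = Pt ∩ Δ` for some
parabolic set `Pt` of `Δ ∪ (-Δ)`. -/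
def IsParabolicRoots {V : Type*} [AddCommGroup V] (Δ P : Set V) : Prop :=
  P ⊂ Δ ∧ ∃ Pt, IsParabolicIn (Δ ∪ -Δ) Pt ∧ P = Pt ∩ Δ

/-- `P = L ⊔ N` is a Levi decomposition of the parabolic set of roots `P`, coming from
a parabolic set `Pt` of `Δ ∪ (-Δ)`. -/
def IsLeviDecomp {V : Type*} [AddCommGroup V] (Δ P L N : Set V) : Prop :=
  ∃ Pt, IsParabolicIn (Δ ∪ -Δ) Pt ∧ P = Pt ∩ Δ ∧
    L = Pt ∩ (-Pt) ∩ Δ ∧ N = (Pt \ (-Pt)) ∩ Δ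

/-- A parabolic set of roots is cominuscule if it admits a nilradical `N` such that the
sum of any two elements of `N` is not a root. -/
def IsCominusculeRoots {V : Type*} [AddCommGroup V] (Δ P : Set V) : Prop :=
  IsParabolicRoots Δ P ∧
    ∃ L N, IsLeviDecomp Δ P L N ∧ ∀ α ∈ N, ∀ β ∈ N, α + β ∉ Δ

namespace Wn

noncomputable def e {n : ℕ} (i : Fin n) : Fin n → ℝ := Pi.single i 1

/-- `ε_I = Σ_{i ∈ I} ε_i`. -/
noncomputable def εF {n : ℕ} (I : Finset (Fin n)) : Fin n → ℝ := ∑ i ∈ I, e i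

/-- The root system of `W(n)`: the roots `ε_{I,j} = ε_I - ε_j` (`j ∉ I`) and `ε_I`
(`∅ ≠ I ⊊ {1,…,n}`). -/
noncomputable def Δroot (n : ℕ) : Set (Fin n → ℝ) :=
  {v | ∃ (I : Finset (Fin n)) (j : Fin n), j ∉ I ∧ v = εF I - e j} ∪
  {v | ∃ I : Finset (Fin n), I.Nonempty ∧ I ≠ Finset.univ ∧ v = εF I}

/-- `I ⊆ [1,n₀]` (in 0-based indexing: all elements of `I` are `< n₀`). -/
def low {n : ℕ} (n₀ : ℕ) (I : Finset (Fin n)) : Prop := ∀ i ∈ I, (i : ℕ) < n₀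

/-- The Levi component `L(n₀)`. -/
noncomputable def L (n n₀ : ℕ) : Set (Fin n → ℝ) :=
  {v | ∃ I : Finset (Fin n), I.Nonempty ∧ low n₀ I ∧ v = εF I} ∪
  {v | ∃ (I : Finset (Fin n)) (j : Fin n), low n₀ I ∧ (j : ℕ) < n₀ ∧ j ∉ I ∧
      v = εF I - e j} ∪
  {v | ∃ (I : Finset (Fin n)) (i j : Fin n), low n₀ I ∧ i ≠ j ∧ n₀ ≤ (i : ℕ) ∧
      n₀ ≤ (j : ℕ) ∧ v = εF I + e i - e j}

/-- The nilradical `N⁺(n₀)`. -/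
noncomputable def Np (n n₀ : ℕ) : Set (Fin n → ℝ) :=
  {v | ∃ (I : Finset (Fin n)) (j : Fin n), low n₀ I ∧ n₀ ≤ (j : ℕ) ∧ v = εF I - e j}

/-- The opposite nilradical `N⁻(n₀)`. -/
noncomputable def Nm (n n₀ : ℕ) : Set (Fin n → ℝ) :=
  {v | ∃ I : Finset (Fin n), I.Nonempty ∧ I ≠ Finset.univ ∧ ¬ low n₀ I ∧ v = εF I} ∪
  {v | ∃ (I : Finset (Fin n)) (j : Fin n), ¬ low n₀ I ∧ (j : ℕ) < n₀ ∧ j ∉ I ∧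
      v = εF I - e j} ∪
  {v | ∃ (I : Finset (Fin n)) (j : Fin n), n₀ ≤ (j : ℕ) ∧ j ∉ I ∧
      2 ≤ (I.filter (fun i : Fin n => n₀ ≤ (i : ℕ))).card ∧ v = εF I - e j}

/-- `P(n₀) = L(n₀) ∪ N⁺(n₀)`. -/
noncomputable def P (n n₀ : ℕ) : Set (Fin n → ℝ) := L n n₀ ∪ Np n n₀

/-- `P⁻(n₀) = L(n₀) ∪ N⁻(n₀)`. -/
noncomputable def Pm (n n₀ : ℕ) : Set (Fin n → ℝ) := L n n₀ ∪ Nm n n₀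

/-- The action of `σ ∈ Sₙ` on `ℝⁿ` permuting the `εᵢ`. -/
def act {n : ℕ} (σ : Equiv.Perm (Fin n)) : (Fin n → ℝ) → (Fin n → ℝ) :=
  fun v => v ∘ σ.symm

end Wn

namespace Sn

/-- `σ₀ = ε₁ + ⋯ + ε_n`. -/
noncomputable def sig (n : ℕ) : Fin n → ℝ := ∑ i : Fin n, Wn.e i

/-- `V = ℝⁿ / ℝσ₀`. -/
abbrev V (n : ℕ) := (Fin n → ℝ) ⧸ (Submodule.span ℝ {sig n})

noncomputable def π (n : ℕ) : (Fin n → ℝ) →ₗ[ℝ] V n := (Submodule.span ℝ {sig n}).mkQ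

/-- `Δ̂_{S(n)}`: the roots `ε_{I,j}` (`j ∉ I`) and `ε_I` with `1 ≤ |I| ≤ n - 2`. -/
noncomputable def Δhat (n : ℕ) : Set (Fin n → ℝ) :=
  {v | ∃ (I : Finset (Fin n)) (j : Fin n), j ∉ I ∧ v = Wn.εF I - Wn.e j} ∪
  {v | ∃ I : Finset (Fin n), 1 ≤ I.card ∧ I.card ≤ n - 2 ∧ v = Wn.εF I}

/-- The root system of `S(n)`, `Δ_{S(n)} = π(Δ̂_{S(n)})`. -/
noncomputable def Δroot (n : ℕ) : Set (V n) := π n '' Δhat n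

noncomputable def LS (n n₀ : ℕ) : Set (V n) := π n '' (Wn.L n n₀ ∩ Δhat n)

noncomputable def NSp (n n₀ : ℕ) : Set (V n) := π n '' (Wn.Np n n₀ ∩ Δhat n)

noncomputable def NSm (n n₀ : ℕ) : Set (V n) := π n '' (Wn.Nm n n₀ ∩ Δhat n)

/-- `P_{S(n)}(n₀)`. -/
noncomputable def PS (n n₀ : ℕ) : Set (V n) := LS n n₀ ∪ NSp n n₀

/-- `P⁻_{S(n)}(n₀)`. -/
noncomputable def PSm (n n₀ : ℕ) : Set (V n) := LS n n₀ ∪ NSm n n₀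

/-- The image of `P ⊆ Δ_{S(n)}` under the action of `σ ∈ Sₙ` descended to `V`. -/
noncomputable def act (n : ℕ) (σ : Equiv.Perm (Fin n)) (P : Set (V n)) : Set (V n) :=
  π n '' (Wn.act σ '' (Δhat n ∩ π n ⁻¹' P))

/-- `P` is a cominuscule parabolic set of roots of `S(n)`: it is parabolic and admits a
nilradical `N⁺` such that for any two elements of `N⁺`, the sum of their lifts to
`Δ̂_{S(n)}` is not a root of `W(n)`. -/
def IsCominusculeS (n : ℕ) (P : Set (V n)) : Prop :=
  IsParabolicRoots (Δroot n) P ∧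
    ∃ Pt, IsParabolicIn (Δroot n ∪ -Δroot n) Pt ∧ P = Pt ∩ Δroot n ∧
      ∀ a ∈ Δhat n, ∀ b ∈ Δhat n,
        π n a ∈ (Pt \ (-Pt)) ∩ Δroot n → π n b ∈ (Pt \ (-Pt)) ∩ Δroot n →
        a + b ∉ Wn.Δroot n

end Sn

namespace SAux
open Wn Sn

variable {n : ℕ}

lemma epsF_empty : Wn.εF (∅ : Finset (Fin n)) = 0 := Finset.sum_empty

lemma epsF_singleton (i : Fin n) : Wn.εF {i} = Wn.e i := Finset.sum_singleton _ _

lemma epsF_insert {x : Fin n} {I : Finset (Fin n)} (h : x ∉ I) :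
    Wn.εF (insert x I) = Wn.e x + Wn.εF I := Finset.sum_insert h

lemma epsF_pair {j k : Fin n} (h : j ≠ k) : Wn.εF {j, k} = Wn.e j + Wn.e k :=
  Finset.sum_pair h

lemma epsF_add_compl (I : Finset (Fin n)) : Wn.εF I + Wn.εF Iᶜ = Sn.sig n :=
  Finset.sum_add_sum_compl I Wn.e

lemma pi_sig : Sn.π n (Sn.sig n) = 0 := by
  show (Submodule.span ℝ {Sn.sig n}).mkQ (Sn.sig n) = 0
  rw [Submodule.mkQ_apply, Submodule.Quotient.mk_eq_zero]
  exact Submodule.mem_span_singleton_self _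

lemma pi_epsF_compl (I : Finset (Fin n)) :
    Sn.π n (Wn.εF Iᶜ) = Sn.π n (-Wn.εF I) := by
  have h : Wn.εF Iᶜ = -Wn.εF I + Sn.sig n := by rw [← epsF_add_compl I]; abel
  rw [h, map_add, pi_sig, add_zero]

lemma neg_e_mem_Δhat (j : Fin n) : -Wn.e j ∈ Sn.Δhat n :=
  Or.inl ⟨∅, j, by simp, by rw [epsF_empty, zero_sub]⟩

lemma pi_neg_e_mem (j : Fin n) : Sn.π n (-Wn.e j) ∈ Sn.Δroot n :=
  ⟨_, neg_e_mem_Δhat j, rfl⟩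

lemma epsFsub_mem_Δhat {I : Finset (Fin n)} {j : Fin n} (h : j ∉ I) :
    Wn.εF I - Wn.e j ∈ Sn.Δhat n := Or.inl ⟨I, j, h, rfl⟩

lemma epsF_mem_Δhat {I : Finset (Fin n)} (h1 : I.Nonempty) (h2 : I.card ≤ n - 2) :
    Wn.εF I ∈ Sn.Δhat n := Or.inr ⟨I, h1.card_pos, h2, rfl⟩

lemma pi_epsF_mem (hn : 4 ≤ n) {I : Finset (Fin n)} (h1 : I.Nonempty)
    (h2 : I.card ≤ n - 1) : Sn.π n (Wn.εF I) ∈ Sn.Δroot n := by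
  rcases le_or_gt I.card (n - 2) with h | h
  · exact ⟨_, epsF_mem_Δhat h1 h, rfl⟩
  · have hcard : I.card = n - 1 := by omega
    have hIc : Iᶜ.card = 1 := by
      rw [Finset.card_compl, Fintype.card_fin, hcard]; omega
    obtain ⟨y, hy⟩ := Finset.card_eq_one.mp hIc
    have h3 := epsF_add_compl I
    rw [hy, epsF_singleton] at h3
    have heq : Wn.εF I = -Wn.e y + Sn.sig n := by rw [← h3]; abel
    rw [heq, map_add, pi_sig, add_zero]
    exact pi_neg_e_mem y

lemma pi_e_mem (hn : 4 ≤ n) (i : Fin n) : Sn.π n (Wn.e i) ∈ Sn.Δroot n := by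
  rw [show Wn.e i = Wn.εF {i} from (epsF_singleton i).symm]
  exact ⟨_, epsF_mem_Δhat ⟨i, by simp⟩ (by rw [Finset.card_singleton]; omega), rfl⟩

/-- Step I: no class `π(-e j)` can lie in the nilradical `Pt \ (-Pt)`. -/
lemma stepI (hn : 4 ≤ n) (Pt : Set (Sn.V n))
    (hE1 : ∀ v ∈ Sn.Δroot n ∪ -Sn.Δroot n, v ∈ Pt ∨ -v ∈ Pt)
    (hE2 : ∀ a, a ∈ Pt → -a ∉ Pt → ∀ d ∈ Pt, a + d ∈ Sn.Δroot n ∪ -Sn.Δroot n →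
      (a + d ∈ Pt ∧ -(a + d) ∉ Pt))
    (H : ∀ a ∈ Sn.Δhat n, ∀ b ∈ Sn.Δhat n,
        Sn.π n a ∈ (Pt \ (-Pt)) ∩ Sn.Δroot n → Sn.π n b ∈ (Pt \ (-Pt)) ∩ Sn.Δroot n →
        a + b ∉ Wn.Δroot n ∧
          ¬ ∃ i j : Fin n, i ≠ j ∧ a = -Wn.e i ∧ b = -Wn.e j)
    (j : Fin n) (h1 : Sn.π n (-Wn.e j) ∈ Pt) (h2 : Sn.π n (Wn.e j) ∉ Pt) : False := by
  have hNa : Sn.π n (-Wn.e j) ∈ (Pt \ (-Pt)) ∩ Sn.Δroot n := by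
    refine ⟨⟨h1, fun hc => h2 ?_⟩, pi_neg_e_mem j⟩
    simpa using Set.mem_neg.mp hc
  obtain ⟨i, k, hi, hk, hik⟩ : ∃ i k : Fin n, i ≠ j ∧ k ≠ j ∧ i ≠ k := by
    have h3 : 1 < ({j}ᶜ : Finset (Fin n)).card := by
      rw [Finset.card_compl, Finset.card_singleton, Fintype.card_fin]; omega
    obtain ⟨i, k, hi, hk, hik⟩ := Finset.one_lt_card_iff.mp h3
    exact ⟨i, k, by simpa using hi, by simpa using hk, hik⟩
  -- (a) for every i' ≠ j, π(e i') ∈ Pt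
  have ha : ∀ i', i' ≠ j → Sn.π n (Wn.e i') ∈ Pt := by
    intro i' hij
    by_cases hc : Sn.π n (Wn.e i') ∈ Pt
    · exact hc
    rcases hE1 (Sn.π n (-Wn.e i')) (Or.inl (pi_neg_e_mem i')) with hm | hm
    · have hNb : Sn.π n (-Wn.e i') ∈ (Pt \ (-Pt)) ∩ Sn.Δroot n := by
        refine ⟨⟨hm, fun hcc => hc ?_⟩, pi_neg_e_mem i'⟩
        simpa using Set.mem_neg.mp hcc
      exact ((H _ (neg_e_mem_Δhat j) _ (neg_e_mem_Δhat i') hNa hNb).2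
        ⟨j, i', Ne.symm hij, rfl, rfl⟩).elim
    · simpa using hm
  -- (b) π(e i - e j) lies in the nilradical
  have hb0 : Sn.π n (-Wn.e j) + Sn.π n (Wn.e i) = Sn.π n (Wn.εF {i} - Wn.e j) := by
    rw [← map_add]; congr 1; rw [epsF_singleton]; abel
  have hjsi : j ∉ ({i} : Finset (Fin n)) := by
    simp only [Finset.mem_singleton]; exact fun h => hi h.symm
  have htN := hE2 _ h1 (by simpa using h2) _ (ha i hi)
    (by rw [hb0]; exact Or.inl ⟨_, epsFsub_mem_Δhat hjsi, rfl⟩)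
  rw [hb0] at htN
  have hjk : j ≠ k := Ne.symm hk
  have hikmem : ({i, k} : Finset (Fin n)).Nonempty := ⟨i, by simp⟩
  have hikcard : ({i, k} : Finset (Fin n)).card ≤ n - 2 := by
    rw [Finset.card_pair hik]; omega
  by_cases hc : Sn.π n (Wn.εF {j, k}) ∈ Pt
  · -- case (d)
    have hsum : Sn.π n (Wn.εF {i} - Wn.e j) + Sn.π n (Wn.εF {j, k})
        = Sn.π n (Wn.εF {i, k}) := by
      rw [← map_add]; congr 1
      rw [epsF_singleton, epsF_pair hjk, epsF_pair hik]; abel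
    have hN2 := hE2 _ htN.1 htN.2 _ hc
      (by rw [hsum]; exact Or.inl ⟨_, epsF_mem_Δhat hikmem hikcard, rfl⟩)
    rw [hsum] at hN2
    have hNb : Sn.π n (Wn.εF {i, k}) ∈ (Pt \ (-Pt)) ∩ Sn.Δroot n :=
      ⟨⟨hN2.1, fun hcc => hN2.2 (Set.mem_neg.mp hcc)⟩,
        ⟨_, epsF_mem_Δhat hikmem hikcard, rfl⟩⟩
    refine (H _ (neg_e_mem_Δhat j) _ (epsF_mem_Δhat hikmem hikcard) hNa hNb).1 ?_
    rw [show -Wn.e j + Wn.εF {i, k} = Wn.εF {i, k} - Wn.e j by abel]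
    exact Or.inl ⟨{i, k}, j,
      by simp only [Finset.mem_insert, Finset.mem_singleton]
         push_neg
         exact ⟨Ne.symm hi, Ne.symm hk⟩, rfl⟩
  · -- case (e)
    have hm : Sn.π n (Wn.εF {j, k}) ∈ Sn.Δroot n :=
      ⟨_, epsF_mem_Δhat ⟨j, by simp⟩ (by rw [Finset.card_pair hjk]; omega), rfl⟩
    rcases hE1 _ (Or.inl hm) with h' | h'
    · exact hc h'
    have hb1 : Sn.π n (Wn.εF ({j, k}ᶜ)) = -Sn.π n (Wn.εF {j, k}) := by
      rw [pi_epsF_compl, map_neg]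
    have hcompl_card : ({j, k}ᶜ : Finset (Fin n)).card = n - 2 := by
      rw [Finset.card_compl, Finset.card_pair hjk, Fintype.card_fin]
    have hcne : ({j, k}ᶜ : Finset (Fin n)).Nonempty :=
      Finset.card_pos.mp (by rw [hcompl_card]; omega)
    have hchat : Wn.εF ({j, k}ᶜ) ∈ Sn.Δhat n :=
      epsF_mem_Δhat hcne (by rw [hcompl_card])
    have hNb : Sn.π n (Wn.εF ({j, k}ᶜ)) ∈ (Pt \ (-Pt)) ∩ Sn.Δroot n := by
      refine ⟨⟨by rw [hb1]; exact h', fun hcc => hc ?_⟩, ⟨_, hchat, rfl⟩⟩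
      have := Set.mem_neg.mp hcc
      rw [hb1, neg_neg] at this
      exact this
    refine (H _ (neg_e_mem_Δhat j) _ hchat hNa hNb).1 ?_
    rw [show -Wn.e j + Wn.εF ({j, k}ᶜ) = Wn.εF ({j, k}ᶜ) - Wn.e j by abel]
    exact Or.inl ⟨_, j, by simp, rfl⟩

/-- Ascent: a class `π(ε_I)` in the nilradical leads to a contradiction. -/
lemma ascent (hn : 4 ≤ n) (Pt : Set (Sn.V n))
    (hE2 : ∀ a, a ∈ Pt → -a ∉ Pt → ∀ d ∈ Pt, a + d ∈ Sn.Δroot n ∪ -Sn.Δroot n →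
      (a + d ∈ Pt ∧ -(a + d) ∉ Pt))
    (hEx : ∀ x, Sn.π n (Wn.e x) ∈ Pt)
    (hSI : ∀ j, Sn.π n (-Wn.e j) ∈ Pt → Sn.π n (Wn.e j) ∉ Pt → False) :
    ∀ (k : ℕ) (I : Finset (Fin n)), n - I.card ≤ k → I.Nonempty → I.card ≤ n - 1 →
      Sn.π n (Wn.εF I) ∈ Pt → -Sn.π n (Wn.εF I) ∉ Pt → False := by
  intro k
  induction k with
  | zero => intro I hk hne hle hmem hneg; omega
  | succ k ih =>
    intro I hk hne hle hmem hneg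
    rcases Nat.lt_or_ge I.card (n - 1) with hlt | hge
    · have hcne : Iᶜ.Nonempty := Finset.card_pos.mp
        (by rw [Finset.card_compl, Fintype.card_fin]; omega)
      obtain ⟨x, hx⟩ := hcne
      have hxI : x ∉ I := Finset.mem_compl.mp hx
      have hsum : Sn.π n (Wn.εF I) + Sn.π n (Wn.e x) = Sn.π n (Wn.εF (insert x I)) := by
        rw [← map_add]; congr 1; rw [epsF_insert hxI]; abel
      have hicard : (insert x I).card = I.card + 1 := Finset.card_insert_of_notMem hxI
      have h2 := hE2 _ hmem hneg _ (hEx x)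
        (by rw [hsum]
            exact Or.inl (pi_epsF_mem hn ⟨x, Finset.mem_insert_self x I⟩
              (by rw [hicard]; omega)))
      rw [hsum] at h2
      exact ih (insert x I) (by rw [hicard]; omega)
        ⟨x, Finset.mem_insert_self x I⟩ (by rw [hicard]; omega) h2.1 h2.2
    · have hcard : I.card = n - 1 := le_antisymm hle hge
      have hIc : Iᶜ.card = 1 := by
        rw [Finset.card_compl, Fintype.card_fin, hcard]; omega
      obtain ⟨y, hy⟩ := Finset.card_eq_one.mp hIc
      have h3 := epsF_add_compl I
      rw [hy, epsF_singleton] at h3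
      have heq : Wn.εF I = -Wn.e y + Sn.sig n := by rw [← h3]; abel
      have hpi : Sn.π n (Wn.εF I) = Sn.π n (-Wn.e y) := by
        rw [heq, map_add, pi_sig, add_zero]
      refine hSI y (by rw [← hpi]; exact hmem) (fun hc => hneg ?_)
      rw [hpi]
      simpa using hc

end SAux
theorem stmt_17 (n : ℕ) (hn : 4 ≤ n) (heven : Even n) :
    ¬ ∃ (P Pt : Set (Sn.V n)),
        P ⊂ Sn.Δroot n ∧
        IsParabolicIn (Sn.Δroot n ∪ -Sn.Δroot n) Pt ∧ P = Pt ∩ Sn.Δroot n ∧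
        ∀ a ∈ Sn.Δhat n, ∀ b ∈ Sn.Δhat n,
          Sn.π n a ∈ (Pt \ (-Pt)) ∩ Sn.Δroot n → Sn.π n b ∈ (Pt \ (-Pt)) ∩ Sn.Δroot n →
          a + b ∉ Wn.Δroot n ∧
            ¬ ∃ i j : Fin n, i ≠ j ∧ a = -Wn.e i ∧ b = -Wn.e j := by
  rintro ⟨P, Pt, hPP, ⟨hProper, hUnion, hClosed⟩, hPPt, H⟩
  clear hPP hPPt
  -- basic engines
  have hΦsymm : ∀ v, v ∈ Sn.Δroot n ∪ -Sn.Δroot n → -v ∈ Sn.Δroot n ∪ -Sn.Δroot n := by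
    intro v hv
    rcases hv with h | h
    · exact Or.inr (Set.mem_neg.mpr (by rwa [neg_neg]))
    · exact Or.inl (Set.mem_neg.mp h)
  have hE1 : ∀ v ∈ Sn.Δroot n ∪ -Sn.Δroot n, v ∈ Pt ∨ -v ∈ Pt := by
    intro v hv
    rw [hUnion] at hv
    rcases hv with h | h
    · exact Or.inl h
    · exact Or.inr (Set.mem_neg.mp h)
  have hsub : Pt ⊆ Sn.Δroot n ∪ -Sn.Δroot n := hProper.subset
  have hE2 : ∀ a, a ∈ Pt → -a ∉ Pt → ∀ d ∈ Pt, a + d ∈ Sn.Δroot n ∪ -Sn.Δroot n →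
      (a + d ∈ Pt ∧ -(a + d) ∉ Pt) := by
    intro a ha hna d hd hΦad
    refine ⟨hClosed a ha d hd hΦad, fun hcon => hna ?_⟩
    have h2 : -(a + d) + d = -a := by abel
    have := hClosed _ hcon d hd (by rw [h2]; exact hΦsymm a (hsub ha))
    rwa [h2] at this
  have hSI : ∀ j, Sn.π n (-Wn.e j) ∈ Pt → Sn.π n (Wn.e j) ∉ Pt → False :=
    SAux.stepI hn Pt hE1 hE2 H
  have hEx : ∀ x, Sn.π n (Wn.e x) ∈ Pt := by
    intro x
    by_cases hc : Sn.π n (Wn.e x) ∈ Pt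
    · exact hc
    rcases hE1 _ (Or.inl (SAux.pi_e_mem hn x)) with h | h
    · exact absurd h hc
    · exact (hSI x (by simpa using h) hc).elim
  have hA : ∀ I : Finset (Fin n), I.Nonempty → I.card ≤ n - 1 →
      Sn.π n (Wn.εF I) ∈ Pt → -Sn.π n (Wn.εF I) ∉ Pt → False :=
    fun I h1 h2 h3 h4 =>
      SAux.ascent hn Pt hE2 hEx hSI (n - I.card) I le_rfl h1 h2 h3 h4
  have hE5 : ∀ a b c : Sn.V n, a ∈ Pt → -a ∉ Pt → a = b + c →
      b ∈ Sn.Δroot n ∪ -Sn.Δroot n → c ∈ Sn.Δroot n ∪ -Sn.Δroot n →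
      (b ∈ Pt ∧ -b ∉ Pt) ∨ (c ∈ Pt ∧ -c ∉ Pt) := by
    intro a b c ha hna habc hbΦ hcΦ
    by_cases hb : -b ∈ Pt
    · right
      have h2 : a + -b = c := by rw [habc]; abel
      have := hE2 a ha hna _ hb (by rw [h2]; exact hcΦ)
      rwa [h2] at this
    · left
      rcases hE1 b hbΦ with h | h
      · exact ⟨h, hb⟩
      · exact absurd h hb
  -- Pt is proper, so the nilradical Pt \ (-Pt) is nonempty
  obtain ⟨v, hvΦ, hvPt⟩ := Set.exists_of_ssubset hProper
  have hαPt : -v ∈ Pt := by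
    rcases hE1 v hvΦ with h | h
    · exact absurd h hvPt
    · exact h
  have hαn : -(-v) ∉ Pt := by rwa [neg_neg]
  have hαΦ : -v ∈ Sn.Δroot n ∪ -Sn.Δroot n := hΦsymm v hvΦ
  set α := -v with hαdef
  -- helper for the singleton case
  have hA1 : ∀ j : Fin n, Sn.π n (Wn.e j) ∈ Pt → -Sn.π n (Wn.e j) ∉ Pt → False := by
    intro j hj1 hj2
    exact hA {j} ⟨j, by simp⟩ (by rw [Finset.card_singleton]; omega)
      (by rw [SAux.epsF_singleton]; exact hj1)
      (by rw [SAux.epsF_singleton]; exact hj2)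
  rcases hαΦ with hD | hD
  · obtain ⟨x, hx, hπx⟩ := hD
    rcases hx with ⟨I, j, hjI, rfl⟩ | ⟨I, hI1, hI2, rfl⟩
    · rcases I.eq_empty_or_nonempty with rfl | hne
      · -- α = π(-e j)
        have hav : Sn.π n (-Wn.e j) = α := by
          rw [← hπx, SAux.epsF_empty, zero_sub]
        refine hSI j (by rw [hav]; exact hαPt) (fun hc => hαn ?_)
        rw [← hav]
        simpa using hc
      · -- split ε_I - e_j = ε_I + (-e_j)
        have hInu : I ≠ Finset.univ := fun h => hjI (by rw [h]; exact Finset.mem_univ j)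
        have hcl : I.card ≤ n := by simpa using Finset.card_le_univ I
        have hIlt : I.card < n := lt_of_le_of_ne hcl
          (fun h => hInu (Finset.eq_univ_of_card I (by simp [h])))
        have hsplit : α = Sn.π n (Wn.εF I) + Sn.π n (-Wn.e j) := by
          rw [← hπx, ← map_add]; congr 1 <;> abel
        rcases hE5 α _ _ hαPt hαn hsplit
          (Or.inl (SAux.pi_epsF_mem hn hne (by omega)))
          (Or.inl (SAux.pi_neg_e_mem j)) with ⟨hb1, hb2⟩ | ⟨hb1, hb2⟩
        · exact hA I hne (by omega) hb1 hb2
        · exact hSI j hb1 (fun hc => hb2 (by simpa using hc))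
    · exact hA I (Finset.card_pos.mp hI1) (by omega)
        (by rw [hπx]; exact hαPt) (by rw [hπx]; exact hαn)
  · have hD' := Set.mem_neg.mp hD
    obtain ⟨x, hx, hπx⟩ := hD'
    rcases hx with ⟨I, j, hjI, rfl⟩ | ⟨I, hI1, hI2, rfl⟩
    · rcases I.eq_empty_or_nonempty with rfl | hne
      · -- α = π(e j)
        have hav : Sn.π n (Wn.e j) = α := by
          have h0 : Wn.e j = -(Wn.εF ∅ - Wn.e j) := by rw [SAux.epsF_empty]; abel
          rw [h0, map_neg, hπx, neg_neg]
        exact hA1 j (by rw [hav]; exact hαPt) (by rw [hav]; exact hαn)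
      · -- α = -π(ε_I - e_j) = π(ε_{Iᶜ}) + π(e j)
        have hcIcard : Iᶜ.card ≤ n - 1 := by
          rw [Finset.card_compl, Fintype.card_fin]
          have := hne.card_pos; omega
        have hsplit : α = Sn.π n (Wn.εF Iᶜ) + Sn.π n (Wn.e j) := by
          have h1 : α = -Sn.π n (Wn.εF I - Wn.e j) := by rw [hπx, neg_neg]
          rw [h1, SAux.pi_epsF_compl, ← map_add, ← map_neg]
          congr 1; abel
        rcases hE5 α _ _ hαPt hαn hsplit
          (Or.inl (SAux.pi_epsF_mem hn ⟨j, Finset.mem_compl.mpr hjI⟩ hcIcard))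
          (Or.inl (SAux.pi_e_mem hn j)) with ⟨hb1, hb2⟩ | ⟨hb1, hb2⟩
        · exact hA Iᶜ ⟨j, Finset.mem_compl.mpr hjI⟩ hcIcard hb1 hb2
        · exact hA1 j hb1 hb2
    · -- α = -π(ε_I) = π(ε_{Iᶜ})
      have hav : Sn.π n (Wn.εF Iᶜ) = α := by
        rw [SAux.pi_epsF_compl, map_neg, hπx, neg_neg]
      exact hA Iᶜ
        (Finset.card_pos.mp (by rw [Finset.card_compl, Fintype.card_fin]; omega))
        (by rw [Finset.card_compl, Fintype.card_fin]; omega)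
        (by rw [hav]; exact hαPt) (by rw [hav]; exact hαn)
end

section
/- Let n ≥ 5, set l := ⌊n/2⌋, and let Δ ⊂ ℝ^l be the root system of H(n), namely Δ := {ε_I − ε_J : I, J ⊆ {1,…,l}, I ∩ J = ∅, (I, J) ≠ (∅, ∅)}, where ε_I := Σ_{i∈I} ε_i (and ε_∅ := 0). Let W be the group of linear maps of ℝ^l of the form ε_i ↦ ±ε_{σ(i)} for σ ∈ S_l, with arbitrary signs if n is odd and with an even number of minus signs if n is even (the Weyl group of so(n)). Set P₀ := {ε_I − ε_J ∈ Δ : 1 ∉ I ∪ J} ∪ {ε_I − ε_J ∈ Δ : 1 ∈ I}. Then a subset P ⊆ Δ is a cominuscule parabolic set of roots of Δ if and only if w(P) = P₀ for some w ∈ W; in particular P₀ is itself a cominuscule parabolic set of roots. -/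
open Pointwise

/-- A proper subset `P` of a symmetric root set `Δ` is a parabolic set of roots if
`Δ = P ∪ (-P)` and `P` is closed under sums lying in `Δ`. -/
def IsParabolic {V : Type*} [AddCommGroup V] (Δ P : Set V) : Prop :=
  P ⊂ Δ ∧ Δ = P ∪ (-P) ∧ ∀ α ∈ P, ∀ β ∈ P, α + β ∈ Δ → α + β ∈ P

/-- A parabolic set of roots is cominuscule if the sum of any two elements of its
nilradical `N⁺ = P \ (-P)` is not a root. -/
def IsCominuscule {V : Type*} [AddCommGroup V] (Δ P : Set V) : Prop :=
  IsParabolic Δ P ∧ ∀ α ∈ P \ (-P), ∀ β ∈ P \ (-P), α + β ∉ Δ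

namespace Hn

variable {l : ℕ}

/-- `ε_I := Σ_{i ∈ I} ε_i` in `ℝ^l` (and `ε_∅ = 0`). -/
noncomputable def εF (I : Finset (Fin l)) : Fin l → ℝ := ∑ i ∈ I, Pi.single i 1

/-- The root system of `H(n)`, `l = ⌊n/2⌋`. -/
noncomputable def Δroot (l : ℕ) : Set (Fin l → ℝ) :=
  {v | ∃ I J : Finset (Fin l), Disjoint I J ∧ ¬(I = ∅ ∧ J = ∅) ∧ v = εF I - εF J}

/-- The cominuscule parabolic set `P₀`: the roots `ε_I - ε_J` with `1 ∉ I ∪ J`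
together with those with `1 ∈ I` (the index `1` is `0` in 0-based indexing). -/
noncomputable def P₀ (l : ℕ) : Set (Fin l → ℝ) :=
  {v | ∃ I J : Finset (Fin l), Disjoint I J ∧ ¬(I = ∅ ∧ J = ∅) ∧
      (∀ i ∈ I ∪ J, (i : ℕ) ≠ 0) ∧ v = εF I - εF J} ∪
  {v | ∃ I J : Finset (Fin l), Disjoint I J ∧ (∃ i ∈ I, (i : ℕ) = 0) ∧ v = εF I - εF J}

/-- A signed permutation `ε_i ↦ ±ε_{σ(i)}` of `ℝ^l`. -/
def act (σ : Equiv.Perm (Fin l)) (s : Fin l → ℝ) : (Fin l → ℝ) → (Fin l → ℝ) :=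
  fun v i => s i * v (σ.symm i)

lemma εF_apply (I : Finset (Fin l)) (j : Fin l) : εF I j = if j ∈ I then 1 else 0 := by
  classical
  simp [εF, Finset.sum_apply, Pi.single_apply]

lemma rep_apply {I J : Finset (Fin l)} (hd : Disjoint I J) (i : Fin l) :
    (εF I - εF J) i = if i ∈ I then 1 else if i ∈ J then -1 else 0 := by
  have : i ∈ I → i ∉ J := fun h => Finset.disjoint_left.mp hd h
  by_cases hI : i ∈ I <;> by_cases hJ : i ∈ J <;>
    simp [εF_apply, hI, hJ] at this ⊢ <;> tauto

lemma mem_Δ {v : Fin l → ℝ} :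
    v ∈ Δroot l ↔ v ≠ 0 ∧ ∀ i, v i = -1 ∨ v i = 0 ∨ v i = 1 := by
  classical
  constructor
  · rintro ⟨I, J, hd, hne, rfl⟩
    constructor
    · intro h0
      have : I ≠ ∅ ∨ J ≠ ∅ := by tauto
      obtain ⟨i, hi⟩ : ∃ i, i ∈ I ∪ J := by
        rcases this with h | h
        · obtain ⟨i, hi⟩ := Finset.nonempty_of_ne_empty h; exact ⟨i, Finset.mem_union_left _ hi⟩
        · obtain ⟨i, hi⟩ := Finset.nonempty_of_ne_empty h; exact ⟨i, Finset.mem_union_right _ hi⟩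
      have := rep_apply hd i
      rw [h0] at this
      simp only [Pi.zero_apply] at this
      rcases Finset.mem_union.mp hi with h | h
      · rw [if_pos h] at this; norm_num at this
      · have hnI : i ∉ I := fun hI => Finset.disjoint_left.mp hd hI h
        rw [if_neg hnI, if_pos h] at this; norm_num at this
    · intro i
      rw [rep_apply hd i]
      split_ifs <;> norm_num
  · rintro ⟨h0, h1⟩
    refine ⟨Finset.univ.filter (fun i => v i = 1), Finset.univ.filter (fun i => v i = -1), ?_, ?_, ?_⟩
    · rw [Finset.disjoint_left]
      intro a ha hb
      simp only [Finset.mem_filter] at ha hb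
      rw [ha.2] at hb; norm_num at hb
    · rintro ⟨hI, hJ⟩
      apply h0
      funext i
      rcases h1 i with h | h | h
      · exfalso; have : i ∈ Finset.univ.filter (fun i => v i = -1) := by simp [h]
        rw [hJ] at this; simp at this
      · exact h
      · exfalso; have : i ∈ Finset.univ.filter (fun i => v i = 1) := by simp [h]
        rw [hI] at this; simp at this
    · funext i
      rw [rep_apply (by
        rw [Finset.disjoint_left]; intro a ha hb
        simp only [Finset.mem_filter] at ha hb
        rw [ha.2] at hb; norm_num at hb) i]
      simp only [Finset.mem_filter, Finset.mem_univ, true_and]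
      rcases h1 i with h | h | h <;> rw [h] <;> norm_num

lemma neg_mem_Δ {v : Fin l → ℝ} (h : v ∈ Δroot l) : -v ∈ Δroot l := by
  rw [mem_Δ] at h ⊢
  refine ⟨by simpa using h.1, fun i => ?_⟩
  rcases h.2 i with h' | h' | h' <;> simp [h']

lemma single_mem_Δ (i : Fin l) {s : ℝ} (hs : s = 1 ∨ s = -1) :
    Pi.single i s ∈ Δroot l := by
  rw [mem_Δ]
  constructor
  · intro h0
    have : (Pi.single i s : Fin l → ℝ) i = 0 := by rw [h0]; simp
    rw [Pi.single_eq_same] at this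
    rcases hs with h | h <;> rw [h] at this <;> norm_num at this
  · intro j
    rcases eq_or_ne j i with rfl | hne
    · rw [Pi.single_eq_same]; tauto
    · rw [Pi.single_eq_of_ne hne]; tauto

lemma mem_P₀ [NeZero l] {v : Fin l → ℝ} :
    v ∈ P₀ l ↔ v ∈ Δroot l ∧ (v 0 = 0 ∨ v 0 = 1) := by
  classical
  constructor
  · rintro (⟨I, J, hd, hne, hz, rfl⟩ | ⟨I, J, hd, ⟨i, hi, hi0⟩, rfl⟩)
    · refine ⟨⟨I, J, hd, hne, rfl⟩, Or.inl ?_⟩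
      have h0I : (0 : Fin l) ∉ I := fun h =>
        hz 0 (Finset.mem_union_left _ h) (Fin.val_zero l)
      have h0J : (0 : Fin l) ∉ J := fun h =>
        hz 0 (Finset.mem_union_right _ h) (Fin.val_zero l)
      rw [rep_apply hd, if_neg h0I, if_neg h0J]
    · have hieq : i = 0 := Fin.ext (by rw [hi0, Fin.val_zero])
      subst hieq
      refine ⟨⟨I, J, hd, ?_, rfl⟩, Or.inr ?_⟩
      · rintro ⟨hI, _⟩; rw [hI] at hi; simp at hi
      · rw [rep_apply hd, if_pos hi]
  · rintro ⟨hv, h0⟩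
    obtain ⟨h0v, h1v⟩ := mem_Δ.mp hv
    -- canonical representation
    set I := Finset.univ.filter (fun i => v i = 1) with hI
    set J := Finset.univ.filter (fun i => v i = -1) with hJ
    have hd : Disjoint I J := by
      rw [Finset.disjoint_left]; intro a ha hb
      simp only [hI, hJ, Finset.mem_filter] at ha hb
      rw [ha.2] at hb; norm_num at hb
    have hrep : v = εF I - εF J := by
      funext i
      rw [rep_apply hd i]
      simp only [hI, hJ, Finset.mem_filter, Finset.mem_univ, true_and]
      rcases h1v i with h | h | h <;> rw [h] <;> norm_num
    rcases h0 with h0 | h0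
    · left
      refine ⟨I, J, hd, ?_, ?_, hrep⟩
      · rintro ⟨hIe, hJe⟩
        apply h0v; funext i
        rcases h1v i with h | h | h
        · exfalso; have : i ∈ J := by simp [hJ, h]
          rw [hJe] at this; simp at this
        · exact h
        · exfalso; have : i ∈ I := by simp [hI, h]
          rw [hIe] at this; simp at this
      · intro i hi hival
        have : i = 0 := Fin.ext (by rw [hival, Fin.val_zero])
        subst this
        rcases Finset.mem_union.mp hi with h | h <;>
          simp only [hI, hJ, Finset.mem_filter] at h <;> rw [h0] at h <;> norm_num at h
    · right
      exact ⟨I, J, hd, ⟨0, by simp [hI, h0], rfl⟩, hrep⟩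

/-! ### act lemmas -/

lemma act_add (σ : Equiv.Perm (Fin l)) (s : Fin l → ℝ) (a b : Fin l → ℝ) :
    act σ s (a + b) = act σ s a + act σ s b := by
  funext i; simp [act, mul_add]

lemma act_neg (σ : Equiv.Perm (Fin l)) (s : Fin l → ℝ) (a : Fin l → ℝ) :
    act σ s (-a) = -(act σ s a) := by
  funext i; simp [act]

lemma act_mem_Δ (σ : Equiv.Perm (Fin l)) {s : Fin l → ℝ} (hs : ∀ i, s i = 1 ∨ s i = -1)
    {v : Fin l → ℝ} (hv : v ∈ Δroot l) : act σ s v ∈ Δroot l := by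
  rw [mem_Δ] at hv ⊢
  constructor
  · intro h0
    apply hv.1
    funext j
    have := congrFun h0 (σ j)
    simp only [act, Pi.zero_apply, Equiv.symm_apply_apply] at this
    rw [Pi.zero_apply]
    rcases hs (σ j) with h | h <;> rw [h] at this <;> linarith
  · intro i
    rcases hs i with h | h <;> rcases hv.2 (σ.symm i) with h' | h' | h' <;>
      simp [act, h, h']

lemma act_act (σ : Equiv.Perm (Fin l)) {s : Fin l → ℝ} (hs : ∀ i, s i = 1 ∨ s i = -1)
    (v : Fin l → ℝ) : act σ s (fun i => s (σ i) * v (σ i)) = v := by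
  funext i
  have hss : s i * s i = 1 := by rcases hs i with h | h <;> rw [h] <;> norm_num
  simp only [act, Equiv.apply_symm_apply, ← mul_assoc, hss, one_mul]

lemma act_leftinv (σ : Equiv.Perm (Fin l)) {s : Fin l → ℝ} (hs : ∀ i, s i = 1 ∨ s i = -1)
    (v : Fin l → ℝ) : (fun i => s (σ i) * (act σ s v) (σ i)) = v := by
  funext i
  have hss : s (σ i) * s (σ i) = 1 := by rcases hs (σ i) with h | h <;> rw [h] <;> norm_num
  simp only [act, Equiv.symm_apply_apply, ← mul_assoc, hss, one_mul]

lemma act_inj (σ : Equiv.Perm (Fin l)) {s : Fin l → ℝ} (hs : ∀ i, s i = 1 ∨ s i = -1) :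
    Function.Injective (act σ s) := by
  intro a b hab
  have ha := act_leftinv σ hs a
  have hb := act_leftinv σ hs b
  rw [← ha, ← hb, hab]

/-! ### cominuscule for the model sets -/

lemma comin_char (i₀ : Fin l) {s₀ : ℝ} (hs₀ : s₀ = 1 ∨ s₀ = -1) :
    IsCominuscule (Δroot l) {v | v ∈ Δroot l ∧ (v i₀ = 0 ∨ v i₀ = s₀)} := by
  set Q : Set (Fin l → ℝ) := {v | v ∈ Δroot l ∧ (v i₀ = 0 ∨ v i₀ = s₀)} with hQ
  have hQD : Q ⊆ Δroot l := fun v hv => hv.1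
  have hnegQ : ∀ v ∈ Δroot l, v i₀ = 0 → -v ∈ Q := by
    intro v hv h0
    exact ⟨neg_mem_Δ hv, Or.inl (by rw [Pi.neg_apply, h0, neg_zero])⟩
  have hNchar : ∀ v ∈ Q, v ∉ -Q → v i₀ = s₀ := by
    intro v hv hv'
    rcases hv.2 with h0 | h0
    · exact absurd (Set.mem_neg.mpr (hnegQ v hv.1 h0)) hv'
    · exact h0
  refine ⟨⟨?_, ?_, ?_⟩, ?_⟩
  · rw [Set.ssubset_def]
    refine ⟨hQD, fun hDQ => ?_⟩
    have hw : Pi.single i₀ (-s₀) ∈ Δroot l :=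
      single_mem_Δ i₀ (by rcases hs₀ with h | h <;> rw [h] <;> norm_num)
    have := (hDQ hw).2
    rw [Pi.single_eq_same] at this
    rcases hs₀ with h | h <;> rw [h] at this <;> norm_num at this
  · ext γ
    constructor
    · intro hγ
      by_cases h : γ i₀ = 0 ∨ γ i₀ = s₀
      · exact Or.inl ⟨hγ, h⟩
      · push_neg at h
        right
        rw [Set.mem_neg]
        refine ⟨neg_mem_Δ hγ, Or.inr ?_⟩
        rw [Pi.neg_apply]
        rcases (mem_Δ.mp hγ).2 i₀ with h' | h' | h' <;> rcases hs₀ with h'' | h'' <;>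
          rw [h', h''] <;> rw [h', h''] at h <;> norm_num at h <;> norm_num
    · rintro (h | h)
      · exact h.1
      · rw [Set.mem_neg] at h
        have := neg_mem_Δ h.1
        rwa [neg_neg] at this
  · rintro α ⟨hαD, hα⟩ β ⟨hβD, hβ⟩ hsum
    refine ⟨hsum, ?_⟩
    rw [Pi.add_apply]
    rcases hα with h | h
    · rcases hβ with h' | h'
      · left; rw [h, h', add_zero]
      · right; rw [h, h', zero_add]
    · rcases hβ with h' | h'
      · right; rw [h, h', add_zero]
      · exfalso
        have h2 := (mem_Δ.mp hsum).2 i₀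
        rw [Pi.add_apply, h, h'] at h2
        rcases hs₀ with h'' | h'' <;> rw [h''] at h2 <;> norm_num at h2
  · rintro α ⟨hα, hα'⟩ β ⟨hβ, hβ'⟩ hsum
    have h1 := hNchar α hα hα'
    have h2 := hNchar β hβ hβ'
    have h3 := (mem_Δ.mp hsum).2 i₀
    rw [Pi.add_apply, h1, h2] at h3
    rcases hs₀ with h | h <;> rw [h] at h3 <;> norm_num at h3

/-! ### classification -/

lemma classify {P : Set (Fin l → ℝ)} (h : IsCominuscule (Δroot l) P) :
    ∃ (i₀ : Fin l) (s₀ : ℝ), (s₀ = 1 ∨ s₀ = -1) ∧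
      P = {v | v ∈ Δroot l ∧ (v i₀ = 0 ∨ v i₀ = s₀)} := by
  classical
  have hPD : P ⊆ Δroot l := h.1.1.1
  have hcov : ∀ γ ∈ Δroot l, γ ∈ P ∨ -γ ∈ P := by
    intro γ hγ
    rw [h.1.2.1] at hγ
    rcases hγ with h' | h'
    · exact Or.inl h'
    · exact Or.inr (Set.mem_neg.mp h')
  have hcl := h.1.2.2
  have hcom : ∀ α, α ∈ P → -α ∉ P → ∀ β, β ∈ P → -β ∉ P → α + β ∉ Δroot l := by
    intro α hα hα' β hβ hβ'
    exact h.2 α ⟨hα, fun hh => hα' (Set.mem_neg.mp hh)⟩ β ⟨hβ, fun hh => hβ' (Set.mem_neg.mp hh)⟩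
  have hLN : ∀ α, α ∈ P → -α ∈ P → ∀ β, β ∈ P → -β ∉ P → α + β ∈ Δroot l →
      α + β ∈ P ∧ -(α + β) ∉ P := by
    intro α hα hα' β hβ hβ' hD
    refine ⟨hcl α hα β hβ hD, fun hneg => ?_⟩
    have heq : -(α + β) + α = -β := by abel
    have h1 : -(α + β) + α ∈ Δroot l := by
      rw [heq]; exact neg_mem_Δ (hPD hβ)
    have h2 := hcl _ hneg _ hα h1
    rw [heq] at h2
    exact hβ' h2
  -- N is nonempty
  obtain ⟨γ₀, hγ₀D, hγ₀P⟩ := Set.exists_of_ssubset h.1.1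
  have hN0 : -γ₀ ∈ P ∧ -(-γ₀) ∉ P := by
    rcases hcov γ₀ hγ₀D with h' | h'
    · exact absurd h' hγ₀P
    · exact ⟨h', by rwa [neg_neg]⟩
  -- a singleton lies in N
  have hsingle : ∃ (i₀ : Fin l) (s₀ : ℝ), (s₀ = 1 ∨ s₀ = -1) ∧
      Pi.single i₀ s₀ ∈ P ∧ -(Pi.single i₀ s₀ : Fin l → ℝ) ∉ P := by
    by_contra hno
    push_neg at hno
    have key : ∀ (k : ℕ) (γ : Fin l → ℝ), (Finset.univ.filter fun j => γ j ≠ 0).card ≤ k →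
        γ ∈ P → -γ ∉ P → False := by
      intro k
      induction k with
      | zero =>
        intro γ hcard γP hγ'
        have hγD := mem_Δ.mp (hPD γP)
        apply hγD.1
        funext j
        by_contra hj
        have hmem : j ∈ Finset.univ.filter fun j => γ j ≠ 0 := by
          simp only [Finset.mem_filter, Finset.mem_univ, true_and]
          simpa using hj
        have := Finset.card_pos.mpr ⟨j, hmem⟩
        omega
      | succ k ih =>
        intro γ hcard γP hγ'
        have hγD := mem_Δ.mp (hPD γP)
        obtain ⟨j, hj⟩ : ∃ j, γ j ≠ 0 := by
          by_contra hall; push_neg at hall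
          exact hγD.1 (funext fun j => hall j)
        have hsj : γ j = 1 ∨ γ j = -1 := by rcases hγD.2 j with h' | h' | h' <;> tauto
        set e : Fin l → ℝ := Pi.single j (γ j) with he
        have heD : e ∈ Δroot l := single_mem_Δ j hsj
        have hnege : -e = Pi.single j (-γ j) := by
          funext i
          rcases eq_or_ne i j with rfl | hij
          · simp [he, Pi.single_eq_same]
          · simp [he, Pi.single_eq_of_ne hij]
        by_cases hγe : γ = e
        · refine hγ' ?_
          have hsp : Pi.single j (γ j) ∈ P := by rw [← he, ← hγe]; exact γP
          have := hno j (γ j) hsj hsp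
          rw [← he, ← hγe] at this
          exact this
        · have heL : e ∈ P ∧ -e ∈ P := by
            rcases hcov e heD with h1 | h1
            · exact ⟨h1, hno j (γ j) hsj h1⟩
            · have h3 := hno j (-γ j)
                (by rcases hsj with h' | h' <;> rw [h'] <;> norm_num) (hnege ▸ h1)
              have h4 : -(Pi.single j (-γ j) : Fin l → ℝ) = e := by
                rw [← hnege, neg_neg]
              rw [h4] at h3
              exact ⟨h3, hnege ▸ h1⟩
          have hβD : γ - e ∈ Δroot l := by
            rw [mem_Δ]
            constructor
            · intro h0
              exact hγe (sub_eq_zero.mp h0)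
            · intro i
              rcases eq_or_ne i j with rfl | hij
              · right; left
                simp [he, Pi.single_eq_same]
              · have : (γ - e) i = γ i := by simp [he, Pi.single_eq_of_ne hij]
                rw [this]; exact hγD.2 i
          have heq2 : -e + γ = γ - e := by abel
          have hstrip := hLN (-e) heL.2 (by rw [neg_neg]; exact heL.1) γ γP hγ' (by rwa [heq2])
          rw [heq2] at hstrip
          apply ih (γ - e) ?_ hstrip.1 hstrip.2
          have hfil : (Finset.univ.filter fun i => (γ - e) i ≠ 0) =
              (Finset.univ.filter fun i => γ i ≠ 0).erase j := by
            ext i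
            simp only [Finset.mem_filter, Finset.mem_univ, true_and, Finset.mem_erase]
            rcases eq_or_ne i j with rfl | hij
            · simp [he, Pi.single_eq_same]
            · simp only [hij, ne_eq, not_false_eq_true, true_and]
              have : (γ - e) i = γ i := by simp [he, Pi.single_eq_of_ne hij]
              rw [this]
          have hjmem : j ∈ Finset.univ.filter fun i => γ i ≠ 0 := by
            simp only [Finset.mem_filter, Finset.mem_univ, true_and]; exact hj
          rw [hfil, Finset.card_erase_of_mem hjmem]
          omega
    obtain ⟨hγ₁, hγ₂⟩ := hN0
    exact key _ (-γ₀) le_rfl hγ₁ hγ₂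
  obtain ⟨i₀, s₀, hs₀, heP, heN⟩ := hsingle
  -- (a) every element of N has i₀-coordinate s₀
  have ha : ∀ γ, γ ∈ P → -γ ∉ P → γ i₀ = s₀ := by
    intro γ hγ hγ'
    by_contra hne
    have hγD := mem_Δ.mp (hPD hγ)
    have hsum : γ + Pi.single i₀ s₀ ∈ Δroot l := by
      rw [mem_Δ]
      constructor
      · intro h0
        have hγeq : γ = -(Pi.single i₀ s₀ : Fin l → ℝ) := eq_neg_of_add_eq_zero_left h0
        rw [hγeq] at hγ
        exact heN hγ
      · intro i
        rcases eq_or_ne i i₀ with rfl | hii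
        · rw [Pi.add_apply, Pi.single_eq_same]
          rcases hγD.2 i with h' | h' | h' <;> rcases hs₀ with h'' | h'' <;>
            rw [h', h''] <;> rw [h''] at hne <;> first
            | (exact absurd h' hne)
            | norm_num
        · rw [Pi.add_apply, Pi.single_eq_of_ne hii, add_zero]
          exact hγD.2 i
    exact hcom γ hγ hγ' _ heP heN hsum
  -- (b) every root with i₀-coordinate s₀ is in N
  have hb : ∀ v ∈ Δroot l, v i₀ = s₀ → v ∈ P ∧ -v ∉ P := by
    intro v hv hvi
    have hnv : -v ∉ P := by
      intro hnvP
      by_cases hvP : v ∈ P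
      · by_cases hve : v = Pi.single i₀ s₀
        · exact heN (hve ▸ hnvP)
        · have hD : -v + Pi.single i₀ s₀ ∈ Δroot l := by
            rw [mem_Δ]
            constructor
            · intro h0
              exact hve (neg_add_eq_zero.mp h0)
            · intro i
              rcases eq_or_ne i i₀ with rfl | hii
              · right; left
                rw [Pi.add_apply, Pi.neg_apply, Pi.single_eq_same, hvi, neg_add_cancel]
              · rw [Pi.add_apply, Pi.neg_apply, Pi.single_eq_of_ne hii, add_zero]
                rcases (mem_Δ.mp hv).2 i with h' | h' | h' <;> rw [h'] <;> norm_num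
          have hres := hLN (-v) hnvP (by rwa [neg_neg]) _ heP heN hD
          have hcoord := ha _ hres.1 hres.2
          rw [Pi.add_apply, Pi.neg_apply, Pi.single_eq_same, hvi, neg_add_cancel] at hcoord
          rcases hs₀ with h' | h' <;> rw [h'] at hcoord <;> norm_num at hcoord
      · have := ha (-v) hnvP (by rwa [neg_neg])
        rw [Pi.neg_apply, hvi] at this
        rcases hs₀ with h' | h' <;> rw [h'] at this <;> norm_num at this
    refine ⟨?_, hnv⟩
    rcases hcov v hv with h1 | h1
    · exact h1
    · exact absurd h1 hnv
  -- (c) every root with i₀-coordinate 0 is in P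
  have hc : ∀ v ∈ Δroot l, v i₀ = 0 → v ∈ P := by
    intro v hv hvi
    rcases hcov v hv with h1 | h1
    · exact h1
    · by_contra hvP
      have := ha (-v) h1 (by rwa [neg_neg])
      rw [Pi.neg_apply, hvi, neg_zero] at this
      rcases hs₀ with h' | h' <;> rw [← this] at h' <;> norm_num at h'
  refine ⟨i₀, s₀, hs₀, ?_⟩
  ext v
  constructor
  · intro hvP
    have hv := hPD hvP
    refine ⟨hv, ?_⟩
    by_contra hboth
    push_neg at hboth
    have hvi : v i₀ = -s₀ := by
      rcases (mem_Δ.mp hv).2 i₀ with h' | h' | h' <;> rcases hs₀ with h'' | h'' <;>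
        rw [h''] at hboth ⊢ <;> rw [h'] at hboth ⊢ <;> norm_num at hboth <;> norm_num
    have h2 := hb (-v) (neg_mem_Δ hv) (by rw [Pi.neg_apply, hvi, neg_neg])
    exact h2.2 (by rwa [neg_neg])
  · rintro ⟨hv, h0 | hs⟩
    · exact hc v hv h0
    · exact (hb v hv hs).1


lemma transport [NeZero l] (σ : Equiv.Perm (Fin l)) {s : Fin l → ℝ}
    (hs : ∀ i, s i = 1 ∨ s i = -1) {P : Set (Fin l → ℝ)} (hPD : P ⊆ Δroot l)
    (him : act σ s '' P = P₀ l) (h₀ : IsCominuscule (Δroot l) (P₀ l)) :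
    IsCominuscule (Δroot l) P := by
  have hginj := act_inj σ hs
  have hmemP : ∀ v, v ∈ P ↔ act σ s v ∈ P₀ l := by
    intro v
    constructor
    · intro hv; rw [← him]; exact ⟨v, hv, rfl⟩
    · intro hv
      rw [← him] at hv
      obtain ⟨u, hu, huv⟩ := hv
      rwa [← hginj huv]
  refine ⟨⟨?_, ?_, ?_⟩, ?_⟩
  · rw [Set.ssubset_def]
    refine ⟨hPD, fun hDP => ?_⟩
    have hw : Pi.single (0 : Fin l) (-1 : ℝ) ∈ Δroot l := single_mem_Δ 0 (Or.inr rfl)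
    have hvD : (fun i => s (σ i) * (Pi.single (0 : Fin l) (-1 : ℝ) : Fin l → ℝ) (σ i)) ∈ Δroot l := by
      have heq : (fun i => s (σ i) * (Pi.single (0 : Fin l) (-1 : ℝ) : Fin l → ℝ) (σ i))
          = act σ.symm (fun i => s (σ i)) (Pi.single (0 : Fin l) (-1 : ℝ)) := by
        funext i; simp [act]
      rw [heq]
      exact act_mem_Δ _ (fun i => hs (σ i)) hw
    have hmem := (hmemP _).mp (hDP hvD)
    rw [act_act σ hs] at hmem
    have := (mem_P₀.mp hmem).2
    rw [Pi.single_eq_same] at this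
    norm_num at this
  · ext γ
    constructor
    · intro hγ
      have hgD : act σ s γ ∈ Δroot l := act_mem_Δ σ hs hγ
      rw [h₀.1.2.1] at hgD
      rcases hgD with h1 | h1
      · exact Or.inl ((hmemP γ).mpr h1)
      · right
        rw [Set.mem_neg]
        apply (hmemP (-γ)).mpr
        rw [act_neg]
        exact Set.mem_neg.mp h1
    · rintro (h1 | h1)
      · exact hPD h1
      · rw [Set.mem_neg] at h1
        have := neg_mem_Δ (hPD h1)
        rwa [neg_neg] at this
  · intro α hα β hβ hsum
    apply (hmemP _).mpr
    rw [act_add]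
    exact h₀.1.2.2 _ ((hmemP α).mp hα) _ ((hmemP β).mp hβ)
      (by rw [← act_add]; exact act_mem_Δ σ hs hsum)
  · rintro α ⟨hα, hα'⟩ β ⟨hβ, hβ'⟩ hsum
    have hgα : act σ s α ∈ P₀ l \ -(P₀ l) := by
      refine ⟨(hmemP α).mp hα, fun hneg => ?_⟩
      rw [Set.mem_neg, ← act_neg] at hneg
      exact hα' (Set.mem_neg.mpr ((hmemP (-α)).mpr hneg))
    have hgβ : act σ s β ∈ P₀ l \ -(P₀ l) := by
      refine ⟨(hmemP β).mp hβ, fun hneg => ?_⟩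
      rw [Set.mem_neg, ← act_neg] at hneg
      exact hβ' (Set.mem_neg.mpr ((hmemP (-β)).mpr hneg))
    have := h₀.2 _ hgα _ hgβ
    apply this
    rw [← act_add]
    exact act_mem_Δ σ hs hsum


end Hn

theorem stmt_18 (n : ℕ) (hn : 5 ≤ n) (l : ℕ) (hl : l = n / 2)
    (P : Set (Fin l → ℝ)) (hP : P ⊆ Hn.Δroot l) :
    (IsCominuscule (Hn.Δroot l) P ↔
      ∃ (σ : Equiv.Perm (Fin l)) (s : Fin l → ℝ), (∀ i, s i = 1 ∨ s i = -1) ∧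
        (n % 2 = 0 → ∏ i, s i = 1) ∧
        Hn.act σ s '' P = Hn.P₀ l) ∧
    IsCominuscule (Hn.Δroot l) (Hn.P₀ l) := by
  have hl2 : 2 ≤ l := by omega
  haveI : NeZero l := ⟨by omega⟩
  have hP₀eq : Hn.P₀ l = {v | v ∈ Hn.Δroot l ∧ (v 0 = 0 ∨ v 0 = 1)} :=
    Set.ext fun v => Hn.mem_P₀
  have hP₀com : IsCominuscule (Hn.Δroot l) (Hn.P₀ l) := by
    rw [hP₀eq]; exact Hn.comin_char 0 (Or.inl rfl)
  refine ⟨⟨?_, ?_⟩, hP₀com⟩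
  · intro hPcom
    obtain ⟨i₀, s₀, hs₀, hPeq⟩ := Hn.classify hPcom
    have hs₀0 : s₀ ≠ 0 := by rcases hs₀ with h | h <;> rw [h] <;> norm_num
    set j₀ : Fin l := ⟨1, by omega⟩ with hj₀
    have hj₀0 : j₀ ≠ 0 := by
      intro h
      have := congrArg Fin.val h
      rw [Fin.val_zero] at this
      simp [hj₀] at this
    set σ : Equiv.Perm (Fin l) := Equiv.swap (0 : Fin l) i₀ with hσdef
    set s : Fin l → ℝ := fun j => if j = 0 ∨ j = j₀ then s₀ else 1 with hsdef
    have hs : ∀ i, s i = 1 ∨ s i = -1 := by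
      intro i
      simp only [hsdef]
      split_ifs
      · exact hs₀
      · exact Or.inl rfl
    have hs00 : s 0 = s₀ := by simp [hsdef]
    have hσ0 : σ.symm 0 = i₀ := by
      rw [hσdef, Equiv.symm_swap, Equiv.swap_apply_left]
    have hσi : σ i₀ = 0 := by rw [hσdef]; exact Equiv.swap_apply_right 0 i₀
    refine ⟨σ, s, hs, fun _ => ?_, ?_⟩
    · have h1 : ∏ i, s i = s 0 * ∏ i ∈ Finset.univ.erase 0, s i :=
        (Finset.mul_prod_erase _ _ (Finset.mem_univ 0)).symm
      have h2 : ∏ i ∈ Finset.univ.erase 0, s i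
          = s j₀ * ∏ i ∈ (Finset.univ.erase 0).erase j₀, s i :=
        (Finset.mul_prod_erase _ _ (Finset.mem_erase.mpr ⟨hj₀0, Finset.mem_univ _⟩)).symm
      have h3 : ∏ i ∈ (Finset.univ.erase 0).erase j₀, s i = 1 := by
        apply Finset.prod_eq_one
        intro i hi
        rw [Finset.mem_erase, Finset.mem_erase] at hi
        simp only [hsdef]
        rw [if_neg]
        push_neg
        exact ⟨hi.2.1, hi.1⟩
      have hsj : s j₀ = s₀ := by simp [hsdef]
      rw [h1, h2, h3, hs00, hsj, mul_one]
      rcases hs₀ with h | h <;> rw [h] <;> norm_num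
    · ext u
      constructor
      · rintro ⟨v, hvP, rfl⟩
        rw [hPeq] at hvP
        rw [Hn.mem_P₀]
        refine ⟨Hn.act_mem_Δ σ hs hvP.1, ?_⟩
        have hval : Hn.act σ s v 0 = s₀ * v i₀ := by
          show s 0 * v (σ.symm 0) = s₀ * v i₀
          rw [hs00, hσ0]
        rw [hval]
        rcases hvP.2 with h | h
        · left; rw [h, mul_zero]
        · right; rw [h]
          rcases hs₀ with h' | h' <;> rw [h'] <;> norm_num
      · intro hu
        rw [Hn.mem_P₀] at hu
        refine ⟨fun i => s (σ i) * u (σ i), ?_, Hn.act_act σ hs u⟩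
        rw [hPeq]
        constructor
        · have heq : (fun i => s (σ i) * u (σ i)) = Hn.act σ.symm (fun i => s (σ i)) u := by
            funext i; simp [Hn.act]
          rw [heq]
          exact Hn.act_mem_Δ _ (fun i => hs (σ i)) hu.1
        · show s (σ i₀) * u (σ i₀) = 0 ∨ s (σ i₀) * u (σ i₀) = s₀
          rw [hσi, hs00]
          rcases hu.2 with h | h
          · left; rw [h, mul_zero]
          · right; rw [h, mul_one]
  · rintro ⟨σ, s, hs, _, him⟩
    exact Hn.transport σ hs hP him hP₀com
end
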